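/- Let R be a right hereditary ring, N a right R-module, and let C be the class of finitely presented R-modules M with Hom_R(M,N) = 0 = Ext^1_R(M,N). Given a short exact sequence 0 → A → B → C → 0 of finitely presented modules in which two of A, B, C belong to C, then so does the third. -/

import Mathlib

/-- `Ext¹_R(M, N) = 0`, expressed concretely: every short exact sequence
`0 → N → X → M → 0` splits. -/
def Ext1Vanishes (R : Type) [Ring R] (M N : Type) [AddCommGroup M] [Module R M]
    [AddCommGroup N] [Module R N] : Prop :=
  ∀ (X : Type) [AddCommGroup X] [Module R X] (i : N →ₗ[R] X) (p : X →ₗ[R] M),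
    Function.Injective i → Function.Surjective p →
    LinearMap.range i = LinearMap.ker p →
    ∃ s : M →ₗ[R] X, p ∘ₗ s = LinearMap.id

/-- Membership in the class `C` of modules left-perpendicular to `N`:
`Hom_R(M,N) = 0 = Ext¹_R(M,N)`. -/
def Perp (R : Type) [Ring R] (M N : Type) [AddCommGroup M] [Module R M]
    [AddCommGroup N] [Module R N] : Prop :=
  (∀ g : M →ₗ[R] N, g = 0) ∧ Ext1Vanishes R M N

/-- A ring is right hereditary if every ideal is projective as a module. -/
def IsRightHereditary (R : Type) [Ring R] : Prop :=
  ∀ I : Ideal R, Module.Projective R I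

section Helpers

variable {R : Type} [Ring R]

/-- `ι` composed with the inverse of the equivalence onto its range is the
inclusion of the range. -/
lemma iota_symm {N X : Type} [AddCommGroup N] [Module R N]
    [AddCommGroup X] [Module R X] (iota : N →ₗ[R] X) (hiota : Function.Injective iota)
    (y : LinearMap.range iota) :
    iota ((LinearEquiv.ofInjective iota hiota).symm y) = (y : X) := by
  conv_rhs => rw [← (LinearEquiv.ofInjective iota hiota).apply_symm_apply y]
  rw [LinearEquiv.ofInjective_apply]

/-- From a section of a short exact sequence, produce a retraction. -/
lemma exists_retraction {N X M : Type} [AddCommGroup N] [Module R N]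
    [AddCommGroup X] [Module R X] [AddCommGroup M] [Module R M]
    (i : N →ₗ[R] X) (p : X →ₗ[R] M) (hi : Function.Injective i)
    (hip : LinearMap.range i = LinearMap.ker p)
    (s : M →ₗ[R] X) (hs : p ∘ₗ s = LinearMap.id) :
    ∃ rho : X →ₗ[R] N, (∀ n, rho (i n) = n) := by
  have key : ∀ x, x - s (p x) ∈ LinearMap.range i := by
    intro x
    rw [hip, LinearMap.mem_ker, map_sub, ← LinearMap.comp_apply p s, hs]
    simp
  let e := LinearEquiv.ofInjective i hi
  let f : X →ₗ[R] LinearMap.range i :=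
    LinearMap.codRestrict _ (LinearMap.id - s ∘ₗ p) key
  refine ⟨e.symm.toLinearMap ∘ₗ f, fun n => ?_⟩
  have h1 : f (i n) = e n := by
    apply Subtype.ext
    have hpi : p (i n) = 0 := by
      have : i n ∈ LinearMap.ker p := hip ▸ LinearMap.mem_range_self i n
      exact this
    simp [f, e, LinearMap.codRestrict, hpi, LinearEquiv.ofInjective_apply]
  simp [LinearMap.comp_apply, h1]

/-- Factor a map through a surjection whose kernel it kills. -/
lemma factor_through {B C X : Type} [AddCommGroup B] [Module R B]
    [AddCommGroup C] [Module R C] [AddCommGroup X] [Module R X]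
    (p : B →ₗ[R] C) (hp : Function.Surjective p) (g : B →ₗ[R] X)
    (h : LinearMap.ker p ≤ LinearMap.ker g) :
    ∃ gbar : C →ₗ[R] X, gbar ∘ₗ p = g := by
  let e := p.quotKerEquivOfSurjective hp
  refine ⟨(Submodule.liftQ (LinearMap.ker p) g h) ∘ₗ e.symm.toLinearMap, ?_⟩
  ext b
  have he : e (Submodule.Quotient.mk b) = p b := rfl
  simp only [LinearMap.comp_apply, LinearEquiv.coe_coe]
  rw [← he, LinearEquiv.symm_apply_apply, Submodule.liftQ_apply]

/-- Given `Ext¹(Z,N) = 0` and a SES `0 → N → X → Y → 0`, any map `Z → Y`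
lifts to `Z → X` (pullback construction). -/
lemma exists_lift {Z N X Y : Type} [AddCommGroup Z] [Module R Z]
    [AddCommGroup N] [Module R N] [AddCommGroup X] [Module R X]
    [AddCommGroup Y] [Module R Y]
    (hZ : Ext1Vanishes R Z N)
    (iota : N →ₗ[R] X) (q : X →ₗ[R] Y) (hiota : Function.Injective iota)
    (hq : Function.Surjective q) (hker : LinearMap.range iota = LinearMap.ker q)
    (f : Z →ₗ[R] Y) : ∃ t : Z →ₗ[R] X, q ∘ₗ t = f := by
  classical
  set P : Submodule R (Z × X) :=
    LinearMap.ker ((f ∘ₗ LinearMap.fst R Z X) - (q ∘ₗ LinearMap.snd R Z X)) with hP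
  have memP : ∀ z x, (z, x) ∈ P ↔ f z = q x := by
    intro z x
    simp [hP, LinearMap.mem_ker, sub_eq_zero]
  let iP : N →ₗ[R] P :=
    LinearMap.codRestrict P ((LinearMap.inr R Z X) ∘ₗ iota)
      (fun n => by
        have hn : q (iota n) = 0 := by
          have : iota n ∈ LinearMap.ker q := by
            rw [← hker]; exact LinearMap.mem_range_self iota n
          exact this
        simp [memP, hn])
  let pP : P →ₗ[R] Z := (LinearMap.fst R Z X) ∘ₗ P.subtype
  have hiP : Function.Injective iP := by
    intro a b hab
    have : iota a = iota b := congrArg (fun w : P => (w : Z × X).2) hab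
    exact hiota this
  have hpP : Function.Surjective pP := by
    intro z
    obtain ⟨x, hx⟩ := hq (f z)
    exact ⟨⟨(z, x), (memP z x).2 hx.symm⟩, rfl⟩
  have hkerP : LinearMap.range iP = LinearMap.ker pP := by
    apply le_antisymm
    · rintro _ ⟨n, rfl⟩
      simp [pP, iP, LinearMap.mem_ker]
      rfl
    · rintro ⟨⟨z, x⟩, hm⟩ hz
      have hz0 : z = 0 := hz
      subst hz0
      have : q x = 0 := by
        have := (memP 0 x).1 hm; simpa using this.symm
      have hx : x ∈ LinearMap.range iota := by rw [hker]; exact this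
      obtain ⟨n, hn⟩ := hx
      exact ⟨n, Subtype.ext (by subst hn; rfl)⟩
  obtain ⟨s, hs⟩ := hZ P iP pP hiP hpP hkerP
  refine ⟨(LinearMap.snd R Z X) ∘ₗ P.subtype ∘ₗ s, ?_⟩
  ext z
  have h1 : pP (s z) = z := by
    have := congrArg (fun g => g z) hs; simpa using this
  have h2 : f ((s z : Z × X).1) = q ((s z : Z × X).2) := (memP _ _).1 (s z).2
  simp only [LinearMap.comp_apply, Submodule.coe_subtype, LinearMap.snd_apply]
  rw [← h2]
  exact congrArg f h1

/-- Pushout: if `Ext¹(B,N)=0` where `B = F/j(K)`, then any `ψ : K → N`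
extends to `θ : F → N` along the injection `j`. -/
lemma exists_extension {K F B N : Type} [AddCommGroup K] [Module R K]
    [AddCommGroup F] [Module R F] [AddCommGroup B] [Module R B]
    [AddCommGroup N] [Module R N]
    (hB : Ext1Vanishes R B N)
    (j : K →ₗ[R] F) (piF : F →ₗ[R] B) (psi : K →ₗ[R] N)
    (hj : Function.Injective j) (hpi : Function.Surjective piF)
    (hjpi : LinearMap.range j = LinearMap.ker piF) :
    ∃ theta : F →ₗ[R] N, theta ∘ₗ j = psi := by
  classical
  set W : Submodule R (N × F) := LinearMap.range (LinearMap.prod psi (-j)) with hW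
  have memW : ∀ n f, (n, f) ∈ W ↔ ∃ k, psi k = n ∧ -(j k) = f := by
    intro n f
    constructor
    · rintro ⟨k, hk⟩
      exact ⟨k, congrArg Prod.fst hk, congrArg Prod.snd hk⟩
    · rintro ⟨k, h1, h2⟩
      exact ⟨k, Prod.ext h1 h2⟩
  let P := (N × F) ⧸ W
  let iP : N →ₗ[R] P := W.mkQ ∘ₗ LinearMap.inl R N F
  have hWk : W ≤ LinearMap.ker (piF ∘ₗ LinearMap.snd R N F) := by
    rintro ⟨n, f⟩ hm
    obtain ⟨k, h1, h2⟩ := (memW n f).1 hm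
    have : piF f = 0 := by
      rw [← h2, map_neg]
      have hk0 : j k ∈ LinearMap.ker piF := by
        rw [← hjpi]; exact LinearMap.mem_range_self j k
      rw [show piF (j k) = 0 from hk0, neg_zero]
    simpa [LinearMap.mem_ker] using this
  let pP : P →ₗ[R] B := Submodule.liftQ W (piF ∘ₗ LinearMap.snd R N F) hWk
  have hiP : Function.Injective iP := by
    rw [injective_iff_map_eq_zero]
    intro n hn
    have : ((n, 0) : N × F) ∈ W := (Submodule.Quotient.mk_eq_zero W).1 hn
    obtain ⟨k, h1, h2⟩ := (memW n 0).1 this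
    have hk0 : k = 0 := hj (by simpa using (neg_eq_zero.1 h2))
    rw [← h1, hk0, map_zero]
  have hpP : Function.Surjective pP := by
    intro b
    obtain ⟨f, hf⟩ := hpi b
    refine ⟨W.mkQ (0, f), ?_⟩
    show Submodule.liftQ W (piF ∘ₗ LinearMap.snd R N F) hWk (W.mkQ (0, f)) = b
    rw [Submodule.mkQ_apply, Submodule.liftQ_apply]
    simpa using hf
  have hkerP : LinearMap.range iP = LinearMap.ker pP := by
    apply le_antisymm
    · rintro _ ⟨n, rfl⟩
      show Submodule.liftQ W (piF ∘ₗ LinearMap.snd R N F) hWk (iP n) = 0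
      show Submodule.liftQ W (piF ∘ₗ LinearMap.snd R N F) hWk (W.mkQ ((n, 0) : N × F)) = 0
      rw [Submodule.mkQ_apply, Submodule.liftQ_apply]
      simp
    · intro z hz
      obtain ⟨⟨n, f⟩, rfl⟩ := Submodule.Quotient.mk_surjective W z
      have hf0 : piF f = 0 := by exact hz
      have hf : f ∈ LinearMap.range j := by rw [hjpi]; exact hf0
      obtain ⟨k, hk⟩ := hf
      refine ⟨n + psi k, ?_⟩
      have hdiff : ((n + psi k, 0) : N × F) - (n, f) ∈ W := by
        have heq : ((n + psi k, 0) : N × F) - (n, f) = (psi k, -(j k)) := by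
          rw [← hk]; ext <;> simp
        rw [heq]
        exact (memW _ _).2 ⟨k, rfl, rfl⟩
      have := (Submodule.Quotient.eq W).2 hdiff
      exact this
  obtain ⟨s, hs⟩ := hB P iP pP hiP hpP hkerP
  obtain ⟨rho, hrho⟩ := exists_retraction iP pP hiP hkerP s hs
  refine ⟨rho ∘ₗ (W.mkQ ∘ₗ LinearMap.inr R N F), ?_⟩
  ext k
  have hEq : W.mkQ (0, j k) = iP (psi k) := by
    refine (Submodule.Quotient.eq W).2 ?_
    have heq : ((0 : N), j k) - (LinearMap.inl R N F) (psi k) = (psi (-k), -(j (-k))) := by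
      ext <;> simp
    rw [heq]
    exact (memW _ _).2 ⟨-k, rfl, rfl⟩
  simp only [LinearMap.comp_apply, LinearMap.inr_apply]
  rw [hEq, hrho]

/-- Over a hereditary ring, any submodule of `R^n` is projective. -/
lemma projective_submodule_pi (hR : IsRightHereditary R) :
    ∀ (n : ℕ) (M : Submodule R (Fin n → R)), Module.Projective R M := by
  intro n
  induction n with
  | zero =>
    intro M
    haveI : Subsingleton (Fin 0 → R) := by
      constructor; intro a b; funext x; exact absurd x.2 (by omega)
    haveI : Subsingleton M := ⟨fun a b => Subtype.ext (Subsingleton.elim _ _)⟩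
    exact Module.Projective.of_split (M := R) (0 : M →ₗ[R] R) (0 : R →ₗ[R] M)
      (LinearMap.ext fun m => Subsingleton.elim _ _)
  | succ n ih =>
    intro M
    let t : M →ₗ[R] R := (LinearMap.proj (Fin.last n)) ∘ₗ M.subtype
    let I : Ideal R := LinearMap.range t
    haveI hI : Module.Projective R I := hR I
    let t' : M →ₗ[R] I := t.rangeRestrict
    have ht' : Function.Surjective t' := t.surjective_rangeRestrict
    obtain ⟨s, hs⟩ := Module.projective_lifting_property t' LinearMap.id ht'
    let K := LinearMap.ker t'
    let u : K →ₗ[R] (Fin n → R) :=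
      (LinearMap.funLeft R R Fin.castSucc) ∘ₗ M.subtype ∘ₗ K.subtype
    have hu : Function.Injective u := by
      rw [injective_iff_map_eq_zero]
      intro m hm
      have h0 : ((m : M) : Fin (n + 1) → R) = 0 := by
        funext x
        refine Fin.lastCases ?_ ?_ x
        · have : t (m : M) = 0 := by
            have : t' (m : M) = 0 := m.2
            exact congrArg Subtype.val this
          exact this
        · intro j
          exact congrFun hm j
      have : (m : M) = 0 := Subtype.ext h0
      exact Subtype.ext this
    haveI hK : Module.Projective R K :=
      Module.Projective.of_equiv (LinearEquiv.ofInjective u hu).symm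
        (M := LinearMap.range u)
    have hmem : ∀ x : M, x - s (t' x) ∈ K := by
      intro x
      have : t' (x - s (t' x)) = 0 := by
        rw [map_sub, ← LinearMap.comp_apply t' s, hs]
        simp
      exact this
    let toKI : M →ₗ[R] K × I :=
      LinearMap.prod (LinearMap.codRestrict K (LinearMap.id - s ∘ₗ t') hmem) t'
    let fromKI : K × I →ₗ[R] M :=
      K.subtype ∘ₗ LinearMap.fst R K I + s ∘ₗ LinearMap.snd R K I
    exact Module.Projective.of_split (M := K × I) toKI fromKI
      (by ext x; simp [toKI, fromKI, LinearMap.codRestrict])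

end Helpers

/-- Over a right hereditary ring, given a short exact sequence
`0 → A → B → C → 0` of finitely presented modules in which two of `A`, `B`, `C`
belong to the class of modules with `Hom(-,N) = 0 = Ext¹(-,N)`, so does the third. -/
theorem stmt2 {R : Type} [Ring R] (hR : IsRightHereditary R)
    {N : Type} [AddCommGroup N] [Module R N]
    {A B C : Type} [AddCommGroup A] [Module R A] [AddCommGroup B] [Module R B]
    [AddCommGroup C] [Module R C]
    (hA : Module.FinitePresentation R A) (hB : Module.FinitePresentation R B)
    (hC : Module.FinitePresentation R C)
    (i : A →ₗ[R] B) (p : B →ₗ[R] C)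
    (hi : Function.Injective i) (hp : Function.Surjective p)
    (hip : LinearMap.range i = LinearMap.ker p) :
    (Perp R A N → Perp R B N → Perp R C N) ∧
    (Perp R A N → Perp R C N → Perp R B N) ∧
    (Perp R B N → Perp R C N → Perp R A N) := by
  classical
  refine ⟨?_, ?_, ?_⟩
  -- Case 1: A, B ∈ C ⟹ C ∈ C
  · intro hA' hB'
    constructor
    · -- Hom(C, N) = 0
      intro g
      have h0 : g ∘ₗ p = 0 := hB'.1 _
      ext c
      obtain ⟨b, rfl⟩ := hp c
      simpa using LinearMap.congr_fun h0 b
    · -- Ext¹(C, N) = 0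
      intro X _ _ iota q hiota hq hker
      obtain ⟨t, ht⟩ := exists_lift hB'.2 iota q hiota hq hker p
      have hti : ∀ a, t (i a) ∈ LinearMap.range iota := by
        intro a
        rw [hker]
        show q (t (i a)) = 0
        rw [← LinearMap.comp_apply q t, ht]
        have : i a ∈ LinearMap.ker p := hip ▸ LinearMap.mem_range_self i a
        exact this
      let u : A →ₗ[R] N := (LinearEquiv.ofInjective iota hiota).symm.toLinearMap ∘ₗ
        LinearMap.codRestrict (LinearMap.range iota) (t ∘ₗ i) hti
      have hu : u = 0 := hA'.1 u
      have htia : ∀ a, t (i a) = 0 := by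
        intro a
        have h1 : iota (u a) = t (i a) := iota_symm iota hiota ⟨t (i a), hti a⟩
        rw [hu] at h1
        simpa using h1.symm
      have hkert : LinearMap.ker p ≤ LinearMap.ker t := by
        intro b hb
        rw [← hip] at hb
        obtain ⟨a, rfl⟩ := hb
        exact htia a
      obtain ⟨tbar, htbar⟩ := factor_through p hp t hkert
      refine ⟨tbar, ?_⟩
      ext c
      obtain ⟨b, rfl⟩ := hp c
      have h1 : tbar (p b) = t b := LinearMap.congr_fun htbar b
      have h2 : q (t b) = p b := LinearMap.congr_fun ht b
      simp [h1, h2]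
  -- Case 2: A, C ∈ C ⟹ B ∈ C
  · intro hA' hC'
    constructor
    · -- Hom(B, N) = 0
      intro g
      have h1 : g ∘ₗ i = 0 := hA'.1 _
      have hkerg : LinearMap.ker p ≤ LinearMap.ker g := by
        intro b hb
        rw [← hip] at hb
        obtain ⟨a, rfl⟩ := hb
        exact LinearMap.congr_fun h1 a
      obtain ⟨gbar, hgbar⟩ := factor_through p hp g hkerg
      have h2 : gbar = 0 := hC'.1 gbar
      ext b
      have := LinearMap.congr_fun hgbar b
      rw [← this, h2]
      simp
    · -- Ext¹(B, N) = 0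
      intro X _ _ iota q hiota hq hker
      obtain ⟨sigma, hsigma⟩ := exists_lift hA'.2 iota q hiota hq hker i
      have hqs : ∀ a, q (sigma a) = i a := fun a => LinearMap.congr_fun hsigma a
      set S : Submodule R X := LinearMap.range sigma with hS
      have hSker : S ≤ LinearMap.ker (p ∘ₗ q) := by
        rintro _ ⟨a, rfl⟩
        show p (q (sigma a)) = 0
        rw [hqs a]
        have : i a ∈ LinearMap.ker p := hip ▸ LinearMap.mem_range_self i a
        exact this
      let qZ : (X ⧸ S) →ₗ[R] C := Submodule.liftQ S (p ∘ₗ q) hSker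
      let iZ : N →ₗ[R] (X ⧸ S) := S.mkQ ∘ₗ iota
      have hqiota : ∀ n, q (iota n) = 0 := by
        intro n
        have : iota n ∈ LinearMap.ker q := hker ▸ LinearMap.mem_range_self iota n
        exact this
      have hiZ : Function.Injective iZ := by
        rw [injective_iff_map_eq_zero]
        intro n hn
        have : iota n ∈ S := (Submodule.Quotient.mk_eq_zero S).1 hn
        obtain ⟨a, ha⟩ := this
        have h1 : i a = 0 := by
          rw [← hqs a, ha, hqiota]
        have h2 : a = 0 := hi (by simpa using h1)
        have : iota n = 0 := by rw [← ha, h2, map_zero]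
        exact hiota (by simpa using this)
      have hqZmk : ∀ x, qZ (S.mkQ x) = p (q x) := by
        intro x
        simp [qZ, Submodule.liftQ_apply]
      have hqZ : Function.Surjective qZ := by
        intro c
        obtain ⟨b, rfl⟩ := hp c
        obtain ⟨x, rfl⟩ := hq b
        exact ⟨S.mkQ x, hqZmk x⟩
      have hkerZ : LinearMap.range iZ = LinearMap.ker qZ := by
        apply le_antisymm
        · rintro _ ⟨n, rfl⟩
          show qZ (S.mkQ (iota n)) = 0
          rw [hqZmk, hqiota, map_zero]
        · intro z hz
          obtain ⟨x, rfl⟩ := Submodule.mkQ_surjective S z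
          have hx : p (q x) = 0 := by rw [← hqZmk]; exact hz
          have : q x ∈ LinearMap.range i := by rw [hip]; exact hx
          obtain ⟨a, ha⟩ := this
          have hxs : q (x - sigma a) = 0 := by
            rw [map_sub, ← ha, hqs a,
              sub_self]
          have : x - sigma a ∈ LinearMap.range iota := by rw [hker]; exact hxs
          obtain ⟨n, hn⟩ := this
          refine ⟨n, ?_⟩
          show S.mkQ (iota n) = S.mkQ x
          rw [hn]
          refine (Submodule.Quotient.eq S).2 ?_
          have : x - sigma a - x = -(sigma a) := by abel
          rw [this]
          exact neg_mem (LinearMap.mem_range_self sigma a)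
      obtain ⟨sC, hsC⟩ := hC'.2 (X ⧸ S) iZ qZ hiZ hqZ hkerZ
      have hqsC : ∀ c, qZ (sC c) = c := fun c => LinearMap.congr_fun hsC c
      let V : Submodule R X := Submodule.comap S.mkQ (LinearMap.range sC)
      let qV : V →ₗ[R] B := q ∘ₗ V.subtype
      have hqVinj : Function.Injective qV := by
        rw [injective_iff_map_eq_zero]
        intro v hv
        obtain ⟨c, hc⟩ := v.2
        have h1 : qZ (S.mkQ (v : X)) = 0 := by
          rw [hqZmk]
          rw [show q (v : X) = 0 from hv, map_zero]
        have h2 : c = 0 := by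
          rw [← hqsC c, hc]
          exact h1
        have h3 : S.mkQ (v : X) = 0 := by rw [← hc, h2, map_zero]
        have : (v : X) ∈ S := (Submodule.Quotient.mk_eq_zero S).1 h3
        obtain ⟨a, ha⟩ := this
        have h4 : i a = 0 := by
          rw [← hqs a, ha]
          exact hv
        have h5 : a = 0 := hi (by simpa using h4)
        have : (v : X) = 0 := by rw [← ha, h5, map_zero]
        exact Subtype.ext this
      have hqVsurj : Function.Surjective qV := by
        intro b
        obtain ⟨x, hx⟩ := Submodule.mkQ_surjective S (sC (p b))
        have h1 : p (q x) = p b := by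
          rw [← hqZmk, hx]
          exact hqsC (p b)
        have : b - q x ∈ LinearMap.range i := by
          rw [hip]
          show p (b - q x) = 0
          rw [map_sub, h1, sub_self]
        obtain ⟨a, ha⟩ := this
        have hmem : x + sigma a ∈ V := by
          show S.mkQ (x + sigma a) ∈ LinearMap.range sC
          have : S.mkQ (x + sigma a) = S.mkQ x := by
            refine (Submodule.Quotient.eq S).2 ?_
            have : x + sigma a - x = sigma a := by abel
            rw [this]
            exact LinearMap.mem_range_self sigma a
          rw [this, hx]
          exact LinearMap.mem_range_self sC (p b)
        refine ⟨⟨x + sigma a, hmem⟩, ?_⟩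
        show q (x + sigma a) = b
        rw [map_add, hqs a, ha]
        abel
      let e := LinearEquiv.ofBijective qV ⟨hqVinj, hqVsurj⟩
      refine ⟨V.subtype ∘ₗ e.symm.toLinearMap, ?_⟩
      ext b
      show q ((e.symm b : V) : X) = b
      have : qV (e.symm b) = b := e.apply_symm_apply b
      exact this
  -- Case 3: B, C ∈ C ⟹ A ∈ C
  · intro hB' hC'
    constructor
    · -- Hom(A, N) = 0
      intro g
      obtain ⟨theta, htheta⟩ := exists_extension hC'.2 i p g hi hp hip
      have h0 : theta = 0 := hB'.1 theta
      ext a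
      have := LinearMap.congr_fun htheta a
      rw [← this, h0]
      simp
    · -- Ext¹(A, N) = 0
      haveI := hB
      obtain ⟨n, piF, hpiF⟩ := Module.Finite.exists_fin' R B
      let F' : Submodule R (Fin n → R) := Submodule.comap piF (LinearMap.range i)
      haveI hF' : Module.Projective R F' := projective_submodule_pi hR n F'
      let eA := LinearEquiv.ofInjective i hi
      let alpha : F' →ₗ[R] A := eA.symm.toLinearMap ∘ₗ
        LinearMap.codRestrict (LinearMap.range i) (piF ∘ₗ F'.subtype) (fun x => x.2)
      have halphaf : ∀ f : F', i (alpha f) = piF (f : Fin n → R) := by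
        intro f
        exact iota_symm i hi ⟨piF (f : Fin n → R), f.2⟩
      have halphasurj : Function.Surjective alpha := by
        intro a
        obtain ⟨f, hf⟩ := hpiF (i a)
        have hfF' : f ∈ F' := by
          show piF f ∈ LinearMap.range i
          rw [hf]
          exact LinearMap.mem_range_self i a
        refine ⟨⟨f, hfF'⟩, hi ?_⟩
        rw [halphaf ⟨f, hfF'⟩]
        exact hf
      intro X _ _ iota q hiota hq hker
      obtain ⟨phi, hphi⟩ := Module.projective_lifting_property q alpha hq
      let K0 : Submodule R (Fin n → R) := LinearMap.ker piF
      have hK0F' : K0 ≤ F' := by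
        intro k hk
        show piF k ∈ LinearMap.range i
        rw [show piF k = 0 from hk]
        exact zero_mem _
      let incl : K0 →ₗ[R] F' := Submodule.inclusion hK0F'
      have hphiK : ∀ k : K0, phi (incl k) ∈ LinearMap.range iota := by
        intro k
        rw [hker]
        show q (phi (incl k)) = 0
        have h1 : q (phi (incl k)) = alpha (incl k) := LinearMap.congr_fun hphi (incl k)
        have h2 : alpha (incl k) = 0 := by
          apply hi
          rw [halphaf (incl k), map_zero]
          exact k.2
        rw [h1, h2]
      let eN := LinearEquiv.ofInjective iota hiota
      let psi : K0 →ₗ[R] N := eN.symm.toLinearMap ∘ₗ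
        LinearMap.codRestrict (LinearMap.range iota) (phi ∘ₗ incl) hphiK
      have hpsi : ∀ k : K0, iota (psi k) = phi (incl k) := by
        intro k
        exact iota_symm iota hiota ⟨phi (incl k), hphiK k⟩
      obtain ⟨theta, htheta⟩ := exists_extension hB'.2 K0.subtype piF psi
        (Submodule.injective_subtype K0) hpiF
        (by rw [Submodule.range_subtype])
      let delta : F' →ₗ[R] X := phi - iota ∘ₗ theta ∘ₗ F'.subtype
      have hkerdelta : LinearMap.ker alpha ≤ LinearMap.ker delta := by
        intro f hf
        have hpif : piF (f : Fin n → R) = 0 := by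
          rw [← halphaf f, show alpha f = 0 from hf, map_zero]
        have hik : incl ⟨(f : Fin n → R), hpif⟩ = f := Subtype.ext rfl
        show delta f = 0
        show phi f - iota (theta ((f : Fin n → R))) = 0
        have h1 : theta ((f : Fin n → R)) = psi ⟨(f : Fin n → R), hpif⟩ :=
          LinearMap.congr_fun htheta ⟨(f : Fin n → R), hpif⟩
        rw [h1, hpsi, hik, sub_self]
      obtain ⟨t, ht⟩ := factor_through alpha halphasurj delta hkerdelta
      refine ⟨t, ?_⟩
      ext a
      obtain ⟨f, rfl⟩ := halphasurj a
      have h1 : t (alpha f) = delta f := LinearMap.congr_fun ht f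
      have h2 : q (iota (theta ((f : Fin n → R)))) = 0 := by
        have : iota (theta ((f : Fin n → R))) ∈ LinearMap.ker q :=
          hker ▸ LinearMap.mem_range_self iota _
        exact this
      show q (t (alpha f)) = alpha f
      rw [h1]
      show q (phi f - iota (theta ((f : Fin n → R)))) = alpha f
      rw [map_sub, h2, sub_zero]
      exact LinearMap.congr_fun hphi f
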